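/- Let U, V ∈ ℝ^{d×K} have orthonormal columns, H = VᵀU, Ĥ = sgn(H). If ε := ‖UUᵀ − VVᵀ‖₂ < 1, then ‖H − Ĥ‖₂ ≤ ε²/(2 − ε²). -/

import Mathlib

open Matrix BigOperators
open scoped Matrix.Norms.L2Operator

/-- Spectral norm (ℓ² operator norm) of a real matrix. -/
noncomputable def specNorm {m n : Type*} [Fintype m] [Fintype n] [DecidableEq n]
    (A : Matrix m n ℝ) : ℝ :=
  ‖LinearMap.toContinuousLinearMap (Matrix.toEuclideanLin A)‖

lemma specNorm_eq_l2 {m n : ℕ} (A : Matrix (Fin m) (Fin n) ℝ) : specNorm A = ‖A‖ := rfl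

lemma norm_ve {n : ℕ} (x : Fin n → ℝ) :
    ‖(WithLp.equiv 2 (Fin n → ℝ)).symm x‖ = Real.sqrt (x ⬝ᵥ x) := by
  rw [EuclideanSpace.norm_eq]
  congr 1
  simp [dotProduct, Real.norm_eq_abs, sq_abs, sq]

lemma dot_self_nonneg {n : ℕ} (x : Fin n → ℝ) : 0 ≤ x ⬝ᵥ x :=
  Finset.sum_nonneg fun _ _ => mul_self_nonneg _

lemma specNorm_le_of_dot {m n : ℕ} (A : Matrix (Fin m) (Fin n) ℝ) (c : ℝ) (hc : 0 ≤ c)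
    (h : ∀ x : Fin n → ℝ, (A *ᵥ x) ⬝ᵥ (A *ᵥ x) ≤ c ^ 2 * (x ⬝ᵥ x)) : specNorm A ≤ c := by
  unfold specNorm
  apply ContinuousLinearMap.opNorm_le_bound _ hc
  intro x
  have hx : x = (WithLp.equiv 2 (Fin n → ℝ)).symm ((WithLp.equiv 2 (Fin n → ℝ)) x) := rfl
  rw [LinearMap.coe_toContinuousLinearMap', hx, WithLp.equiv_symm_apply, Matrix.toEuclideanLin_apply_piLp_toLp,
    ← WithLp.equiv_symm_apply,
    norm_ve, ← WithLp.equiv_symm_apply, norm_ve]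
  set x' := (WithLp.equiv 2 (Fin n → ℝ)) x
  calc Real.sqrt ((A *ᵥ x') ⬝ᵥ (A *ᵥ x')) ≤ Real.sqrt (c ^ 2 * (x' ⬝ᵥ x')) :=
        Real.sqrt_le_sqrt (h x')
    _ = c * Real.sqrt (x' ⬝ᵥ x') := by
        rw [Real.sqrt_mul (sq_nonneg c), Real.sqrt_sq hc]

lemma dot_mulVec_le {m n : ℕ} (A : Matrix (Fin m) (Fin n) ℝ) (x : Fin n → ℝ) :
    (A *ᵥ x) ⬝ᵥ (A *ᵥ x) ≤ specNorm A ^ 2 * (x ⬝ᵥ x) := by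
  have h := Matrix.l2_opNorm_mulVec A ((WithLp.equiv 2 (Fin n → ℝ)).symm x)
  have h2 : ‖(EuclideanSpace.equiv (Fin m) ℝ).symm (A *ᵥ x)‖ ≤
      ‖A‖ * ‖(WithLp.equiv 2 (Fin n → ℝ)).symm x‖ := by simpa using h
  rw [show ((EuclideanSpace.equiv (Fin m) ℝ).symm (A *ᵥ x) : EuclideanSpace ℝ (Fin m)) =
      (WithLp.equiv 2 (Fin m → ℝ)).symm (A *ᵥ x) from rfl, norm_ve, norm_ve] at h2
  have h3 : Real.sqrt ((A *ᵥ x) ⬝ᵥ (A *ᵥ x)) ^ 2 ≤ (‖A‖ * Real.sqrt (x ⬝ᵥ x)) ^ 2 :=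
    pow_le_pow_left₀ (Real.sqrt_nonneg _) h2 2
  rw [Real.sq_sqrt (dot_self_nonneg _), mul_pow, Real.sq_sqrt (dot_self_nonneg _)] at h3
  rw [specNorm_eq_l2]
  exact h3

lemma dot_mulVec_self {m n : ℕ} (A : Matrix (Fin m) (Fin n) ℝ) (x : Fin n → ℝ) :
    (A *ᵥ x) ⬝ᵥ (A *ᵥ x) = x ⬝ᵥ ((Aᵀ * A) *ᵥ x) := by
  rw [← Matrix.mulVec_mulVec, Matrix.mulVec_transpose, Matrix.dotProduct_mulVec,
    dotProduct_comm]

/-- Let `U, V ∈ ℝ^{d×K}` have orthonormal columns, `H = VᵀU` with SVD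
`H = P diag(σ) Qᵀ`, and `Ĥ = sgn(H)`.  If `ε := ‖UUᵀ − VVᵀ‖₂ < 1`, then
`‖H − Ĥ‖₂ ≤ ε²/(2 − ε²)`. -/
theorem specNorm_H_sub_sign_le {d K : ℕ} (U V : Matrix (Fin d) (Fin K) ℝ)
    (hU : Uᵀ * U = 1) (hV : Vᵀ * V = 1)
    (P Q : Matrix (Fin K) (Fin K) ℝ) (σ : Fin K → ℝ)
    (hP : Pᵀ * P = 1) (hQ : Qᵀ * Q = 1) (hσ0 : ∀ j, 0 ≤ σ j)
    (hSVD : Vᵀ * U = P * Matrix.diagonal σ * Qᵀ)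
    (Hhat : Matrix (Fin K) (Fin K) ℝ)
    (hHhat : Hhat = P * Matrix.diagonal (fun j => if 0 < σ j then (1 : ℝ) else 0) * Qᵀ)
    (ε : ℝ) (hε : ε = specNorm (U * Uᵀ - V * Vᵀ)) (hlt : ε < 1) :
    specNorm (Vᵀ * U - Hhat) ≤ ε ^ 2 / (2 - ε ^ 2) := by
  set D := Matrix.diagonal σ with hD
  have hQQ : Q * Qᵀ = 1 := mul_eq_one_comm.mp hQ
  have hUV : Uᵀ * V = Q * (D * Pᵀ) := by
    have := congrArg Matrix.transpose hSVD
    simpa [hD, Matrix.transpose_mul, Matrix.diagonal_transpose, Matrix.mul_assoc] using this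
  -- cancellation lemmas in right-associated form
  have sU : ∀ (X : Matrix (Fin K) (Fin K) ℝ), Uᵀ * (U * X) = X := fun X => by
    rw [← Matrix.mul_assoc, hU, Matrix.one_mul]
  have sV : ∀ (X : Matrix (Fin K) (Fin K) ℝ), Vᵀ * (V * X) = X := fun X => by
    rw [← Matrix.mul_assoc, hV, Matrix.one_mul]
  have sP : ∀ (X : Matrix (Fin K) (Fin K) ℝ), Pᵀ * (P * X) = X := fun X => by
    rw [← Matrix.mul_assoc, hP, Matrix.one_mul]
  have sQ : ∀ (X : Matrix (Fin K) (Fin K) ℝ), Qᵀ * (Q * X) = X := fun X => by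
    rw [← Matrix.mul_assoc, hQ, Matrix.one_mul]
  have sVU : ∀ (X : Matrix (Fin K) (Fin K) ℝ), Vᵀ * (U * X) = P * (D * (Qᵀ * X)) := fun X => by
    rw [← Matrix.mul_assoc, hSVD]; simp [Matrix.mul_assoc]
  have sUV : ∀ (X : Matrix (Fin K) (Fin K) ℝ), Uᵀ * (V * X) = Q * (D * (Pᵀ * X)) := fun X => by
    rw [← Matrix.mul_assoc, hUV]; simp [Matrix.mul_assoc]
  -- key matrix identities
  have hW : (U * Uᵀ - V * Vᵀ) * (U * Q) = U * Q - V * (P * D) := by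
    simp [Matrix.sub_mul, Matrix.mul_assoc, sU, sVU, hQ]
  have hWtW : (U * Q - V * (P * D))ᵀ * (U * Q - V * (P * D)) = 1 - D * D := by
    simp [Matrix.transpose_sub, Matrix.transpose_mul, Matrix.diagonal_transpose,
      Matrix.sub_mul, Matrix.mul_sub, Matrix.mul_assoc, sU, sV, sP, sQ, sUV, sVU, hQ, hD]
  have hε0 : 0 ≤ ε := by rw [hε, specNorm_eq_l2]; exact norm_nonneg _
  -- per-singular-value bounds
  have key : ∀ j, 1 - σ j ^ 2 ≤ ε ^ 2 ∧ σ j ≤ 1 := by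
    intro j
    set e : Fin K → ℝ := Pi.single j 1 with he'
    have he : e ⬝ᵥ e = 1 := by simp [he', dotProduct_single]
    set y : Fin d → ℝ := (U * Q) *ᵥ e with hy'
    have hyy : y ⬝ᵥ y = 1 := by
      rw [hy', dot_mulVec_self]
      have : (U * Q)ᵀ * (U * Q) = 1 := by
        simp [Matrix.transpose_mul, Matrix.mul_assoc, sU, hQ]
      rw [this, Matrix.one_mulVec, he]
    set z : Fin d → ℝ := ((U * Uᵀ - V * Vᵀ) * (U * Q)) *ᵥ e with hz'
    have hzz : z ⬝ᵥ z = 1 - σ j ^ 2 := by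
      rw [hz', dot_mulVec_self, hW, hWtW]
      have h1 : (1 - D * D : Matrix (Fin K) (Fin K) ℝ) =
          Matrix.diagonal (fun i => 1 - σ i * σ i) := by
        rw [hD, Matrix.diagonal_mul_diagonal, ← Matrix.diagonal_one, Matrix.diagonal_sub]
      rw [h1, he', Matrix.diagonal_mulVec_single]
      simp [dotProduct_single, sq]
    have hzb : z ⬝ᵥ z ≤ ε ^ 2 := by
      have : z = (U * Uᵀ - V * Vᵀ) *ᵥ y := by rw [hz', hy', Matrix.mulVec_mulVec]
      rw [this]
      calc ((U * Uᵀ - V * Vᵀ) *ᵥ y) ⬝ᵥ ((U * Uᵀ - V * Vᵀ) *ᵥ y)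
          ≤ specNorm (U * Uᵀ - V * Vᵀ) ^ 2 * (y ⬝ᵥ y) := dot_mulVec_le _ _
        _ = ε ^ 2 := by rw [hyy, hε, mul_one]
    have hzpos : 0 ≤ z ⬝ᵥ z := dot_self_nonneg z
    constructor
    · linarith [hzz ▸ hzb]
    · nlinarith [hσ0 j, hzz ▸ hzpos]
  have hε1 : ε ^ 2 < 1 := by nlinarith
  have h2ε : 0 < 2 - ε ^ 2 := by linarith
  set c : ℝ := ε ^ 2 / (2 - ε ^ 2) with hc'
  have hc0 : 0 ≤ c := div_nonneg (sq_nonneg _) h2ε.le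
  have hσpos : ∀ j, 0 < σ j := by
    intro j
    rcases key j with ⟨h1, _⟩
    have := hσ0 j
    nlinarith
  have hgap : ∀ j, 1 - σ j ≤ c := by
    intro j
    rcases key j with ⟨h1, h2⟩
    have h0 := hσ0 j
    rw [hc', le_div_iff₀ h2ε]
    nlinarith [mul_nonneg (by linarith : (0:ℝ) ≤ ε ^ 2 - (1 - σ j ^ 2)) (by linarith : (0:ℝ) ≤ 2 - σ j),
      mul_nonneg h0 (sq_nonneg (1 - σ j))]
  -- rewrite the difference
  have hsplit : Vᵀ * U - Hhat = P * Matrix.diagonal (fun i => σ i - 1) * Qᵀ := by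
    have hite : (fun j => if 0 < σ j then (1:ℝ) else 0) = fun _ => 1 :=
      funext fun j => if_pos (hσpos j)
    have hd1 : Matrix.diagonal (fun i => σ i - 1) = D - 1 := by
      rw [hD, ← Matrix.diagonal_one, Matrix.diagonal_sub]
    rw [hSVD, hHhat, hite, Matrix.diagonal_one, hd1]
    noncomm_ring
  have hPn : specNorm P ≤ 1 := by
    apply specNorm_le_of_dot _ _ zero_le_one
    intro x
    rw [dot_mulVec_self, hP, Matrix.one_mulVec, one_pow, one_mul]
  have hQn : specNorm Qᵀ ≤ 1 := by
    apply specNorm_le_of_dot _ _ zero_le_one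
    intro x
    rw [dot_mulVec_self, Matrix.transpose_transpose, hQQ, Matrix.one_mulVec, one_pow, one_mul]
  have hDn : specNorm (Matrix.diagonal (fun i => σ i - 1)) ≤ c := by
    apply specNorm_le_of_dot _ _ hc0
    intro x
    have hmv : Matrix.diagonal (fun i => σ i - 1) *ᵥ x = fun i => (σ i - 1) * x i := by
      funext i; rw [Matrix.mulVec_diagonal]
    rw [hmv]
    unfold dotProduct
    rw [Finset.mul_sum]
    apply Finset.sum_le_sum
    intro i _
    have h1 : (σ i - 1) ^ 2 ≤ c ^ 2 := by
      apply sq_le_sq'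
      · linarith [hgap i]
      · linarith [hσpos i, hc0, (key i).2]
    show ((σ i - 1) * x i) * ((σ i - 1) * x i) ≤ c ^ 2 * (x i * x i)
    nlinarith [mul_nonneg (sub_nonneg.mpr h1) (mul_self_nonneg (x i))]
  rw [hsplit]
  calc specNorm (P * Matrix.diagonal (fun i => σ i - 1) * Qᵀ)
      ≤ ‖P * Matrix.diagonal (fun i => σ i - 1)‖ * ‖Qᵀ‖ := Matrix.l2_opNorm_mul _ _
    _ ≤ (‖P‖ * ‖Matrix.diagonal (fun i => σ i - 1)‖) * ‖Qᵀ‖ :=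
        mul_le_mul_of_nonneg_right (Matrix.l2_opNorm_mul _ _) (norm_nonneg _)
    _ ≤ (1 * c) * 1 := by
        apply mul_le_mul (mul_le_mul hPn hDn (norm_nonneg _) zero_le_one) hQn (norm_nonneg _)
        positivity
    _ = c := by ring
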